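/- Fix β > 1. For every n ≥ 2, the number of admissible words of length n which are not full is at most the number of admissible words of length n−1: #Σ_n(β) − #Ξ_n(β) ≤ #Σ_{n−1}(β). -/

import Mathlib

open MeasureTheory Set
open scoped Classical

/-- The beta-transformation `T_β x = βx - ⌊βx⌋`. -/
noncomputable def betaT (β x : ℝ) : ℝ := Int.fract (β * x)

/-- The `k`-th digit (0-indexed) of the β-expansion of `x`: `ε_{k+1}(x,β) = ⌊β T_β^k x⌋`. -/
noncomputable def betaDigit (β x : ℝ) (k : ℕ) : ℕ := ⌊β * (betaT β)^[k] x⌋₊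

/-- `Σ_n(β)`: admissible words of length `n`, i.e. prefixes of β-expansions of points of `[0,1)`. -/
def admWords (β : ℝ) (n : ℕ) : Set (Fin n → ℕ) :=
  {w | ∃ x ∈ Set.Ico (0:ℝ) 1, ∀ i : Fin n, w i = betaDigit β x i}

/-- The cylinder `𝔍(w)` of points of `[0,1)` whose β-expansion starts with `w`. -/
def cyl (β : ℝ) {n : ℕ} (w : Fin n → ℕ) : Set ℝ :=
  {x | x ∈ Set.Ico (0:ℝ) 1 ∧ ∀ i : Fin n, betaDigit β x i = w i}

/-- `Ξ_n(β)`: admissible words of length `n` whose cylinder is full (of length `β^{-n}`). -/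
def fullWords (β : ℝ) (n : ℕ) : Set (Fin n → ℕ) :=
  {w | w ∈ admWords β n ∧ volume (cyl β w) = ENNReal.ofReal (1 / β ^ n)}

/-- `ε(β)`: the β-expansion of 1 (0-indexed). -/
noncomputable def eps1 (β : ℝ) (k : ℕ) : ℕ := betaDigit β 1 k

/-- `ε*(β)`: the infinite β-expansion of 1.  If `ε(β)` has a last nonzero digit at
(0-indexed) position `N`, it is the periodic sequence `(ε_0 ⋯ ε_{N-1} (ε_N - 1))^∞`;
otherwise it is `ε(β)` itself. -/

noncomputable def epsStar (β : ℝ) : ℕ → ℕ :=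
  if h : ∃ N, eps1 β N ≠ 0 ∧ ∀ k, N < k → eps1 β k = 0 then
    fun k => if k % (h.choose + 1) = h.choose then eps1 β h.choose - 1
             else eps1 β (k % (h.choose + 1))
  else eps1 β

/-- Strict lexicographic order on sequences of nonnegative integers. -/
def lexLt (a b : ℕ → ℕ) : Prop := ∃ i, (∀ j, j < i → a j = b j) ∧ a i < b i

/-- Strict lexicographic order on words of length `n`. -/
def wordLt {n : ℕ} (a b : Fin n → ℕ) : Prop :=
  ∃ i : Fin n, (∀ j, j < i → a j = b j) ∧ a i < b i

/-- `Ω_n(x)`: all length-`n` prefixes of β-expansions of `x` over all bases `β > 1`. -/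
def prefWords (x : ℝ) (n : ℕ) : Set (Fin n → ℕ) :=
  {w | ∃ β : ℝ, 1 < β ∧ ∀ i : Fin n, w i = betaDigit β x i}

/-- The parameter cylinder `I(w) = {β > 1 : ε_1(x,β)⋯ε_n(x,β) = w}`. -/
def pcyl (x : ℝ) {n : ℕ} (w : Fin n → ℕ) : Set ℝ :=
  {β | 1 < β ∧ ∀ i : Fin n, betaDigit β x i = w i}

/-- `Λ_n(x)`: words whose parameter cylinder is full, i.e. `{T_β^n x : β ∈ I(w)} = [0,1)`. -/
def pfull (x : ℝ) (n : ℕ) : Set (Fin n → ℕ) :=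
  {w | w ∈ prefWords x n ∧ (fun β => (betaT β)^[n] x) '' pcyl x w = Set.Ico (0:ℝ) 1}

section aux
variable {β : ℝ}

lemma betaT_mem_Ico (x : ℝ) : betaT β x ∈ Set.Ico (0:ℝ) 1 :=
  ⟨Int.fract_nonneg _, Int.fract_lt_one _⟩

lemma iter_mem_Ico {x : ℝ} (hx : x ∈ Set.Ico (0:ℝ) 1) (n : ℕ) :
    (betaT β)^[n] x ∈ Set.Ico (0:ℝ) 1 := by
  cases n with
  | zero => exact hx
  | succ n => rw [Function.iterate_succ_apply']; exact betaT_mem_Ico _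

lemma betaT_apply (hβ : 1 < β) {y : ℝ} (hy : 0 ≤ y) :
    betaT β y = β * y - (⌊β * y⌋₊ : ℝ) := by
  unfold betaT Int.fract
  congr 1
  exact (natCast_floor_eq_intCast_floor (mul_nonneg (by linarith) hy)).symm

lemma betaDigit_succ (β x : ℝ) (k : ℕ) :
    betaDigit β x (k + 1) = betaDigit β (betaT β x) k := by
  unfold betaDigit
  rw [Function.iterate_succ_apply]

lemma iterate_succ_eq (hβ : 1 < β) {x : ℝ} (hx : x ∈ Set.Ico (0:ℝ) 1) (n : ℕ) :
    (betaT β)^[n+1] x = β * (betaT β)^[n] x - (betaDigit β x n : ℝ) := by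
  rw [Function.iterate_succ_apply']
  exact betaT_apply hβ (iter_mem_Ico hx n).1

/-- Lemma B: telescoping expansion. -/
lemma expand (hβ : 1 < β) {x : ℝ} (hx : x ∈ Set.Ico (0:ℝ) 1) (n : ℕ) :
    x = (∑ k ∈ Finset.range n, (betaDigit β x k : ℝ) / β ^ (k+1)) + (betaT β)^[n] x / β ^ n := by
  have hβ0 : (0:ℝ) < β := by linarith
  induction n with
  | zero => simp
  | succ n ih =>
    have hstep := iterate_succ_eq hβ hx n
    have hpow : (0:ℝ) < β ^ n := pow_pos hβ0 n
    rw [Finset.sum_range_succ, hstep]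
    conv_lhs => rw [ih]
    have h2 : (betaT β)^[n] x / β ^ n =
        (betaDigit β x n : ℝ) / β ^ (n+1) +
          (β * (betaT β)^[n] x - (betaDigit β x n : ℝ)) / β ^ (n+1) := by
      rw [pow_succ]
      field_simp
      ring
    linarith

/-- Lemma A: points of the cylinder realizing any smaller value of `T^[n]`. -/
lemma approx (hβ : 1 < β) (n : ℕ) : ∀ x s : ℝ, x ∈ Set.Ico (0:ℝ) 1 → 0 ≤ s →
    s ≤ (betaT β)^[n] x →
    ∃ z, z ∈ Set.Ico (0:ℝ) 1 ∧ (∀ k, k < n → betaDigit β z k = betaDigit β x k) ∧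
      (betaT β)^[n] z = s ∧ z ≤ x := by
  have hβ0 : (0:ℝ) < β := by linarith
  induction n with
  | zero =>
    intro x s hx hs0 hs
    exact ⟨s, ⟨hs0, lt_of_le_of_lt hs hx.2⟩, fun k hk => absurd hk (Nat.not_lt_zero k),
      rfl, hs⟩
  | succ n ih =>
    intro x s hx hs0 hs
    have hx1 : betaT β x ∈ Set.Ico (0:ℝ) 1 := betaT_mem_Ico x
    have hs' : s ≤ (betaT β)^[n] (betaT β x) := by
      rwa [← Function.iterate_succ_apply]
    obtain ⟨z₁, hz₁, hdig, hTz₁, hle₁⟩ := ih (betaT β x) s hx1 hs0 hs'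
    set d : ℕ := betaDigit β x 0 with hd
    have hdx : betaT β x = β * x - (d : ℝ) := by
      have := betaT_apply hβ hx.1
      simpa [hd, betaDigit] using this
    refine ⟨((d:ℝ) + z₁) / β, ?_, ?_, ?_, ?_⟩
    · constructor
      · exact div_nonneg (add_nonneg (Nat.cast_nonneg d) hz₁.1) hβ0.le
      · have hle : ((d:ℝ) + z₁) / β ≤ x := by
          rw [div_le_iff₀ hβ0]
          have : z₁ ≤ β * x - (d:ℝ) := hdx ▸ hle₁
          linarith
        exact lt_of_le_of_lt hle hx.2
    · intro k hk
      have hmul : β * (((d:ℝ) + z₁) / β) = (d:ℝ) + z₁ := by field_simp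
      have hTz : betaT β (((d:ℝ) + z₁) / β) = z₁ := by
        unfold betaT
        rw [hmul, Int.fract_natCast_add, Int.fract_eq_self.2 ⟨hz₁.1, hz₁.2⟩]
      cases k with
      | zero =>
        show ⌊β * (betaT β)^[0] (((d:ℝ) + z₁)/β)⌋₊ = _
        rw [Function.iterate_zero_apply, hmul, add_comm, Nat.floor_add_natCast hz₁.1,
          Nat.floor_eq_zero.2 hz₁.2]
        omega
      | succ k =>
        rw [betaDigit_succ, betaDigit_succ, hTz]
        exact hdig k (by omega)
    · have hmul : β * (((d:ℝ) + z₁) / β) = (d:ℝ) + z₁ := by field_simp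
      have hTz : betaT β (((d:ℝ) + z₁) / β) = z₁ := by
        unfold betaT
        rw [hmul, Int.fract_natCast_add, Int.fract_eq_self.2 ⟨hz₁.1, hz₁.2⟩]
      rw [Function.iterate_succ_apply, hTz, hTz₁]
    · rw [div_le_iff₀ hβ0]
      have : z₁ ≤ β * x - (d:ℝ) := hdx ▸ hle₁
      linarith

lemma cyl_eq_Ico (hβ : 1 < β) (m : ℕ) (w : Fin (m+1) → ℕ) {x' : ℝ}
    (hx' : x' ∈ Set.Ico (0:ℝ) 1)
    (hpre : ∀ k (hk : k < m), betaDigit β x' k = w ⟨k, by omega⟩)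
    (hlast : w (Fin.last m) < betaDigit β x' m) :
    cyl β w = Set.Ico (∑ i : Fin (m+1), (w i : ℝ) / β ^ ((i:ℕ)+1))
      ((∑ i : Fin (m+1), (w i : ℝ) / β ^ ((i:ℕ)+1)) + 1 / β ^ (m+1)) := by
  have hβ0 : (0:ℝ) < β := by linarith
  have hpow : (0:ℝ) < β ^ (m+1) := pow_pos hβ0 _
  set V : ℝ := ∑ i : Fin (m+1), (w i : ℝ) / β ^ ((i:ℕ)+1) with hV
  have hsum : ∀ y : ℝ, (∀ i : Fin (m+1), betaDigit β y (i:ℕ) = w i) →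
      (∑ k ∈ Finset.range (m+1), (betaDigit β y k : ℝ) / β ^ (k+1)) = V := by
    intro y hy
    rw [hV, ← Fin.sum_univ_eq_sum_range (fun k => (betaDigit β y k : ℝ) / β ^ (k+1)) (m+1)]
    exact Finset.sum_congr rfl (fun i _ => by rw [hy i])
  ext y
  constructor
  · rintro ⟨hy, hdy⟩
    have hB := expand hβ hy (m+1)
    rw [hsum y hdy] at hB
    have hT : (betaT β)^[m+1] y ∈ Set.Ico (0:ℝ) 1 := iter_mem_Ico hy (m+1)
    constructor
    · rw [hB]; have : 0 ≤ (betaT β)^[m+1] y / β ^ (m+1) := div_nonneg hT.1 hpow.le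
      linarith
    · rw [hB]
      have : (betaT β)^[m+1] y / β ^ (m+1) < 1 / β ^ (m+1) :=
        (div_lt_div_iff_of_pos_right hpow).2 hT.2
      linarith
  · rintro ⟨h1, h2⟩
    set s : ℝ := (y - V) * β ^ (m+1) with hsdef
    have hs0 : 0 ≤ s := mul_nonneg (by linarith) hpow.le
    have hs1 : s < 1 := by
      rw [hsdef]
      have : y - V < 1 / β ^ (m+1) := by linarith
      calc (y - V) * β ^ (m+1) < (1 / β ^ (m+1)) * β ^ (m+1) := by
            exact mul_lt_mul_of_pos_right this hpow
        _ = 1 := by field_simp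
    set wl : ℕ := w (Fin.last m) with hwl
    have hu : ((wl : ℝ) + 1) ≤ β * (betaT β)^[m] x' := by
      have h1' : wl + 1 ≤ betaDigit β x' m := hlast
      have hnn : 0 ≤ β * (betaT β)^[m] x' := mul_nonneg hβ0.le (iter_mem_Ico hx' m).1
      have := (Nat.le_floor_iff hnn).1 h1'
      push_cast at this
      linarith
    have hs'le : ((wl : ℝ) + s) / β ≤ (betaT β)^[m] x' := by
      rw [div_le_iff₀ hβ0]
      nlinarith
    have hs'0 : 0 ≤ ((wl : ℝ) + s) / β := by positivity
    obtain ⟨z, hz, hdig, hTz, -⟩ := approx hβ m x' (((wl : ℝ) + s) / β) hx' hs'0 hs'le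
    have hmul : β * (betaT β)^[m] z = (wl : ℝ) + s := by
      rw [hTz]; field_simp
    have hdm : betaDigit β z m = wl := by
      show ⌊β * (betaT β)^[m] z⌋₊ = wl
      rw [hmul, add_comm, Nat.floor_add_natCast hs0, Nat.floor_eq_zero.2 hs1]
      omega
    have hTm1 : (betaT β)^[m+1] z = s := by
      rw [Function.iterate_succ_apply']
      show Int.fract (β * (betaT β)^[m] z) = s
      rw [hmul, Int.fract_natCast_add, Int.fract_eq_self.2 ⟨hs0, hs1⟩]
    have hdz : ∀ i : Fin (m+1), betaDigit β z (i:ℕ) = w i := by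
      intro i
      by_cases hi : (i:ℕ) < m
      · exact (hdig _ hi).trans (hpre _ hi)
      · have hlt' := i.isLt
        have : i = Fin.last m := Fin.ext (by simp only [Fin.val_last]; omega)
        rw [this]
        exact hdm
    have hyz : y = z := by
      have hB := expand hβ hz (m+1)
      rw [hsum z hdz, hTm1] at hB
      rw [hB, hsdef]
      field_simp
      ring
    rw [hyz]
    exact ⟨hz, hdz⟩

lemma full_of_larger (hβ : 1 < β) (m : ℕ) {w w' : Fin (m+1) → ℕ}
    (hw : w ∈ admWords β (m+1)) (hw' : w' ∈ admWords β (m+1))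
    (hpre : ∀ k (hk : k < m), w ⟨k, by omega⟩ = w' ⟨k, by omega⟩)
    (hlt : w (Fin.last m) < w' (Fin.last m)) :
    w ∈ fullWords β (m+1) := by
  obtain ⟨x', hx', hwx'⟩ := hw'
  have hcyl := cyl_eq_Ico hβ m w hx'
    (fun k hk => by
      have := hwx' ⟨k, by omega⟩
      rw [← this]
      exact (hpre k hk).symm)
    (by
      have hlm : betaDigit β x' m = w' (Fin.last m) := by
        simpa using (hwx' (Fin.last m)).symm
      rw [hlm]
      exact hlt)
  refine ⟨hw, ?_⟩
  rw [hcyl, Real.volume_Ico]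
  congr 1
  ring

lemma adm_finite (hβ : 1 < β) (k : ℕ) : (admWords β k).Finite := by
  apply Set.Finite.subset (Set.finite_Icc (fun _ : Fin k => 0) (fun _ => ⌊β⌋₊))
  rintro w ⟨x, hx, hwx⟩
  constructor
  · intro i; exact Nat.zero_le _
  · intro i
    rw [hwx i]
    show ⌊β * (betaT β)^[(i:ℕ)] x⌋₊ ≤ ⌊β⌋₊
    apply Nat.floor_le_floor
    have h := iter_mem_Ico (β := β) hx (i : ℕ)
    nlinarith [h.1, h.2]

end aux

theorem nonfull_card_le (β : ℝ) (hβ : 1 < β) (n : ℕ) (hn : 2 ≤ n) :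
    (admWords β n).ncard - (fullWords β n).ncard ≤ (admWords β (n - 1)).ncard := by
  obtain ⟨m, rfl⟩ : ∃ m, n = m + 1 := ⟨n - 1, by omega⟩
  have hsub : fullWords β (m+1) ⊆ admWords β (m+1) := fun w hw => hw.1
  rw [← Set.ncard_diff hsub ((adm_finite hβ (m+1)).subset hsub)]
  refine Set.ncard_le_ncard_of_injOn (fun w => w ∘ Fin.castSucc) ?_ ?_ (adm_finite hβ m)
  · rintro w ⟨⟨x, hx, hwx⟩, -⟩
    exact ⟨x, hx, fun i => hwx i.castSucc⟩
  · rintro w hw w' hw' hr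
    by_contra hne
    have hpre : ∀ k (hk : k < m), w ⟨k, by omega⟩ = w' ⟨k, by omega⟩ := by
      intro k hk
      exact congrFun hr (⟨k, hk⟩ : Fin m)
    have hlastne : w (Fin.last m) ≠ w' (Fin.last m) := by
      intro h
      apply hne
      funext i
      by_cases hi : (i:ℕ) < m
      · have h2 := hpre (i:ℕ) hi
        have he : (⟨(i:ℕ), by omega⟩ : Fin (m+1)) = i := Fin.ext rfl
        rwa [he] at h2
      · have hlt' := i.isLt
        have : i = Fin.last m := Fin.ext (by simp only [Fin.val_last]; omega)
        rw [this, h]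
    rcases Nat.lt_or_ge (w (Fin.last m)) (w' (Fin.last m)) with hlt | hge
    · exact hw.2 (full_of_larger hβ m hw.1 hw'.1 hpre hlt)
    · have hlt' : w' (Fin.last m) < w (Fin.last m) := by omega
      exact hw'.2 (full_of_larger hβ m hw'.1 hw.1
        (fun k hk => (hpre k hk).symm) hlt')
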